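/- The function U_ω(x) = μ (√(1+ω) cosh(μx) − i√(1−ω) sinh(μx)) / (1 + ω cosh(2μx)), with μ = √(1−ω²) and ω ∈ (0,1), satisfies the ODE i U' − ω U + conj(U) = 2 |U|² U, i.e. the stationary equation of the massive Gross–Neveu model with β₁ = −β₂ = 1/2. -/

import Mathlib

/-- The massive Gross–Neveu line soliton profile. -/
noncomputable def grossNeveuSoliton (ω x : ℝ) : ℂ :=
  (↑(Real.sqrt (1 - ω ^ 2)) : ℂ) *
    ((↑(Real.sqrt (1 + ω) * Real.cosh (Real.sqrt (1 - ω ^ 2) * x)) : ℂ)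
      - Complex.I * (↑(Real.sqrt (1 - ω) * Real.sinh (Real.sqrt (1 - ω ^ 2) * x)) : ℂ)) /
    (↑(1 + ω * Real.cosh (2 * Real.sqrt (1 - ω ^ 2) * x)) : ℂ)

/-- The Gross–Neveu soliton satisfies `i U' − ω U + conj U = |U|² U + conj(U)³`,
i.e. the stationary massive Gross–Neveu equation with β₁ = −β₂ = 1/2. -/
theorem grossNeveuSoliton_ode (ω : ℝ) (hω : ω ∈ Set.Ioo (0 : ℝ) 1) (x : ℝ) :
    Complex.I * deriv (grossNeveuSoliton ω) x - (ω : ℂ) * grossNeveuSoliton ω x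
      + (starRingEnd ℂ) (grossNeveuSoliton ω x)
      = ((3 * (1/2 : ℂ) + (-(1/2) : ℂ)) * (↑(‖grossNeveuSoliton ω x‖) : ℂ) ^ 2
            * grossNeveuSoliton ω x)
        + ((1/2 : ℂ) - (-(1/2) : ℂ)) * ((starRingEnd ℂ) (grossNeveuSoliton ω x)) ^ 3 := by
  obtain ⟨hω0, hω1⟩ := hω
  set m := Real.sqrt (1 - ω ^ 2) with hm
  set a := Real.sqrt (1 + ω) with ha
  set b := Real.sqrt (1 - ω) with hb
  have hm2 : m ^ 2 = 1 - ω ^ 2 := Real.sq_sqrt (by nlinarith)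
  have ha2 : a ^ 2 = 1 + ω := Real.sq_sqrt (by linarith)
  have hb2 : b ^ 2 = 1 - ω := Real.sq_sqrt (by linarith)
  have hab : m = a * b := by
    rw [hm, ha, hb, show (1:ℝ) - ω ^ 2 = (1 + ω) * (1 - ω) by ring,
      Real.sqrt_mul (by linarith)]
  have hD : ∀ y : ℝ, (1 + ω * Real.cosh (2 * m * y)) ≠ 0 := by
    intro y
    have := Real.cosh_pos (2 * m * y)
    nlinarith
  set P : ℝ → ℝ := fun y => m * a * Real.cosh (m * y) / (1 + ω * Real.cosh (2 * m * y)) with hP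
  set Q : ℝ → ℝ := fun y => m * b * Real.sinh (m * y) / (1 + ω * Real.cosh (2 * m * y)) with hQ
  have hUeq : grossNeveuSoliton ω = fun y => (P y : ℂ) - Complex.I * (Q y : ℂ) := by
    funext y
    simp only [grossNeveuSoliton, hP, hQ, ← hm, ← ha, ← hb]
    have hDC : ((1 + ω * Real.cosh (2 * m * y) : ℝ) : ℂ) ≠ 0 := by
      exact_mod_cast hD y
    push_cast
    field_simp
  -- derivatives
  have hPder : HasDerivAt P
      ((m * a * (Real.sinh (m * x) * (m * 1)) * (1 + ω * Real.cosh (2 * m * x))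
        - m * a * Real.cosh (m * x) * (ω * (Real.sinh (2 * m * x) * (2 * m * 1))))
        / (1 + ω * Real.cosh (2 * m * x)) ^ 2) x := by
    apply HasDerivAt.div
    · exact ((Real.hasDerivAt_cosh (m * x)).comp x ((hasDerivAt_id x).const_mul m)).const_mul (m * a)
    · exact (((Real.hasDerivAt_cosh (2 * m * x)).comp x
        ((hasDerivAt_id x).const_mul (2 * m))).const_mul ω).const_add 1
    · exact hD x
  have hQder : HasDerivAt Q
      ((m * b * (Real.cosh (m * x) * (m * 1)) * (1 + ω * Real.cosh (2 * m * x))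
        - m * b * Real.sinh (m * x) * (ω * (Real.sinh (2 * m * x) * (2 * m * 1))))
        / (1 + ω * Real.cosh (2 * m * x)) ^ 2) x := by
    apply HasDerivAt.div
    · exact ((Real.hasDerivAt_sinh (m * x)).comp x ((hasDerivAt_id x).const_mul m)).const_mul (m * b)
    · exact (((Real.hasDerivAt_cosh (2 * m * x)).comp x
        ((hasDerivAt_id x).const_mul (2 * m))).const_mul ω).const_add 1
    · exact hD x
  have hUder := (hPder.ofReal_comp).sub ((hQder.ofReal_comp).const_mul Complex.I)
  -- trig facts at x
  have hcs : Real.cosh (m * x) ^ 2 - Real.sinh (m * x) ^ 2 = 1 :=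
    Real.cosh_sq_sub_sinh_sq (m * x)
  have hcosh2 : Real.cosh (2 * m * x) = 2 * Real.cosh (m * x) ^ 2 - 1 := by
    rw [show 2 * m * x = 2 * (m * x) by ring, Real.cosh_two_mul]
    linarith
  have hsinh2 : Real.sinh (2 * m * x) = 2 * Real.sinh (m * x) * Real.cosh (m * x) := by
    rw [show 2 * m * x = 2 * (m * x) by ring, Real.sinh_two_mul]
  have hpq : P x ^ 2 - Q x ^ 2 = m ^ 2 / (1 + ω * Real.cosh (2 * m * x)) := by
    simp only [hP, hQ]
    rw [div_pow, div_pow, div_sub_div_same,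
      show (m * a * Real.cosh (m * x)) ^ 2 - (m * b * Real.sinh (m * x)) ^ 2
        = m ^ 2 * (1 + ω * Real.cosh (2 * m * x)) from by
          rw [hcosh2]
          linear_combination (m ^ 2 * Real.cosh (m * x) ^ 2) * ha2
            - (m ^ 2 * Real.sinh (m * x) ^ 2) * hb2 + (m ^ 2 * (1 - ω)) * hcs]
    have h0 := hD x
    field_simp
  -- key ODE identities for the real and imaginary parts
  have key1 : (m * a * (Real.sinh (m * x) * (m * 1)) * (1 + ω * Real.cosh (2 * m * x))
        - m * a * Real.cosh (m * x) * (ω * (Real.sinh (2 * m * x) * (2 * m * 1))))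
        / (1 + ω * Real.cosh (2 * m * x)) ^ 2
      = 2 * Q x * (P x ^ 2 - Q x ^ 2) - (1 + ω) * Q x := by
    rw [hpq]
    simp only [hQ]
    rw [show m * a * (Real.sinh (m * x) * (m * 1)) * (1 + ω * Real.cosh (2 * m * x))
        - m * a * Real.cosh (m * x) * (ω * (Real.sinh (2 * m * x) * (2 * m * 1)))
        = m * b * Real.sinh (m * x) * (2 * m ^ 2 - (1 + ω) * (1 + ω * Real.cosh (2 * m * x)))
        from by
          rw [hcosh2, hsinh2]
          linear_combination ((1) * b * Real.sinh (m * x) + (-1) * b * Real.sinh (m * x) * ω ^ 2 + (2) * b * Real.cosh (m * x) ^ 2 * Real.sinh (m * x) * ω + (2) * b * Real.cosh (m * x) ^ 2 * Real.sinh (m * x) * ω ^ 2 + (1) * a ^ 2 * b * Real.sinh (m * x) + (-1) * a ^ 2 * b * Real.sinh (m * x) * ω + (-2) * a ^ 2 * b * Real.cosh (m * x) ^ 2 * Real.sinh (m * x) * ω + (-2) * a ^ 2 * b ^ 3 * Real.sinh (m * x) + (1) * m * a * Real.sinh (m * x) + (-1) * m * a * Real.sinh (m * x) * ω + (-2) *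 m * a * Real.cosh (m * x) ^ 2 * Real.sinh (m * x) * ω + (-2) * m * a * b ^ 2 * Real.sinh (m * x) + (-2) * m ^ 2 * b * Real.sinh (m * x)) * hab
            + ((1) * a * b ^ 2 * Real.sinh (m * x) + (-1) * a * b ^ 2 * Real.sinh (m * x) * ω + (-2) * a * b ^ 2 * Real.cosh (m * x) ^ 2 * Real.sinh (m * x) * ω + (-2) * a * b ^ 4 * Real.sinh (m * x)) * ha2
            + ((-2) * a * b ^ 2 * Real.sinh (m * x) + (-2) * a * b ^ 2 * Real.sinh (m * x) * ω) * hb2]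
    field_simp
  have key2 : (m * b * (Real.cosh (m * x) * (m * 1)) * (1 + ω * Real.cosh (2 * m * x))
        - m * b * Real.sinh (m * x) * (ω * (Real.sinh (2 * m * x) * (2 * m * 1))))
        / (1 + ω * Real.cosh (2 * m * x)) ^ 2
      = 2 * P x * (P x ^ 2 - Q x ^ 2) - (1 - ω) * P x := by
    rw [hpq]
    simp only [hP]
    rw [show m * b * (Real.cosh (m * x) * (m * 1)) * (1 + ω * Real.cosh (2 * m * x))
        - m * b * Real.sinh (m * x) * (ω * (Real.sinh (2 * m * x) * (2 * m * 1)))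
        = m * a * Real.cosh (m * x) * (2 * m ^ 2 - (1 - ω) * (1 + ω * Real.cosh (2 * m * x)))
        from by
          rw [hcosh2, hsinh2]
          linear_combination ((1) * a * Real.cosh (m * x) + (-2) * a * Real.cosh (m * x) * ω + (1) * a * Real.cosh (m * x) * ω ^ 2 + (2) * a * Real.cosh (m * x) ^ 3 * ω + (-2) * a * Real.cosh (m * x) ^ 3 * ω ^ 2 + (1) * a * b ^ 2 * Real.cosh (m * x) + (-1) * a * b ^ 2 * Real.cosh (m * x) * ω + (-4) * a * b ^ 2 * Real.cosh (m * x) * Real.sinh (m * x) ^ 2 * ω + (2) * a * b ^ 2 * Real.cosh (m * x) ^ 3 * ω + (-2) * a ^ 3 * b ^ 2 * Real.cosh (m * x) + (1) * m * b * Real.cosh (m * x) + (-1) * m * b * Real.cosh (m * x) * ω + (-4) * m * b * Real.cosh (m * x) * Real.sinh (m * x) ^ 2 * ω + (2) * m * b * Real.cosh (m * x) ^ 3 * ω + (-2) * m * a ^ 2 * b * Real.cosh (m * x) + (-2) * m ^ 2 * a * Real.cosh (m * x)) * hab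
            + ((1) * b * Real.cosh (m * x) + (-2) * b * Real.cosh (m * x) * ω + (1) * b * Real.cosh (m * x) * ω ^ 2 + (2) * b * Real.cosh (m * x) ^ 3 * ω + (-2) * b * Real.cosh (m * x) ^ 3 * ω ^ 2 + (-1) * b ^ 3 * Real.cosh (m * x) + (-3) * b ^ 3 * Real.cosh (m * x) * ω + (-4) * b ^ 3 * Real.cosh (m * x) * Real.sinh (m * x) ^ 2 * ω + (2) * b ^ 3 * Real.cosh (m * x) ^ 3 * ω + (-2) * a ^ 2 * b ^ 3 * Real.cosh (m * x)) * ha2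
            + ((-1) * b * Real.cosh (m * x) + (-4) * b * Real.cosh (m * x) * ω + (-3) * b * Real.cosh (m * x) * ω ^ 2 + (-4) * b * Real.cosh (m * x) * Real.sinh (m * x) ^ 2 * ω + (-4) * b * Real.cosh (m * x) * Real.sinh (m * x) ^ 2 * ω ^ 2 + (2) * b * Real.cosh (m * x) ^ 3 * ω + (2) * b * Real.cosh (m * x) ^ 3 * ω ^ 2) * hb2
            + ((4) * b * Real.cosh (m * x) * ω + (-4) * b * Real.cosh (m * x) * ω ^ 3) * hcs]
    field_simp
  -- assemble
  simp only [hUeq]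
  rw [(show HasDerivAt (fun y => (P y : ℂ) - Complex.I * (Q y : ℂ)) _ x from hUder).deriv, key1, key2]
  rw [show ((‖(P x : ℂ) - Complex.I * (Q x : ℂ)‖ : ℝ) : ℂ) ^ 2
      = ((P x : ℂ) - Complex.I * (Q x : ℂ)) * (starRingEnd ℂ) ((P x : ℂ) - Complex.I * (Q x : ℂ))
      from by rw [← Complex.ofReal_pow, Complex.sq_norm, ← Complex.mul_conj]]
  simp only [map_sub, map_mul, Complex.conj_ofReal, Complex.conj_I]
  push_cast
  linear_combination ((-2 * (Q x : ℂ) ^ 3) * Complex.I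
    - (2 * (P x : ℂ) * ((P x : ℂ) ^ 2 - (Q x : ℂ) ^ 2) - (1 - (ω : ℂ)) * (P x : ℂ))
    - 2 * (P x : ℂ) * (Q x : ℂ) ^ 2) * Complex.I_sq
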